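/- There is a constant $C > 0$ such that for every integer $N \ge 2$ and every $q$-lacunary integer sequence $(n_k)$ with $q > 1$, $\int_{-1/2}^{1/2}\left|\sum_{k=1}^N e^{2i\pi n_k t}\right| dt \ge C\sqrt{N}$ (with $C$ depending only on $q$). -/

import Mathlib

open Real MeasureTheory Finset

lemma helper_memL2 (u : ℝ → ℝ) (hu : Continuous u) :
    MemLp u (ENNReal.ofReal 2) (volume.restrict (Set.Ioc (-(1/2):ℝ) (1/2))) := by
  have hfin : IsFiniteMeasure (volume.restrict (Set.Ioc (-(1/2):ℝ) (1/2))) := by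
    constructor
    rw [Measure.restrict_apply_univ]
    exact (measure_Ioc_lt_top)
  obtain ⟨C, hC⟩ := (isCompact_Icc (a := (-(1/2):ℝ)) (b := 1/2)).exists_bound_of_continuousOn
    hu.continuousOn
  have htop : MemLp u ⊤ (volume.restrict (Set.Ioc (-(1/2):ℝ) (1/2))) := by
    apply memLp_top_of_bound hu.aestronglyMeasurable C
    filter_upwards [ae_restrict_mem measurableSet_Ioc] with x hx
    exact hC x (Set.Ioc_subset_Icc_self hx)
  exact htop.mono_exponent le_top

lemma helper_cs (u v : ℝ → ℝ) (hu : Continuous u) (hv : Continuous v)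
    (hun : ∀ x, 0 ≤ u x) (hvn : ∀ x, 0 ≤ v x) :
    (∫ x in (-(1/2):ℝ)..(1/2), u x * v x)
      ≤ Real.sqrt (∫ x in (-(1/2):ℝ)..(1/2), u x ^ 2)
        * Real.sqrt (∫ x in (-(1/2):ℝ)..(1/2), v x ^ 2) := by
  have hab : (-(1/2):ℝ) ≤ 1/2 := by norm_num
  rw [intervalIntegral.integral_of_le hab, intervalIntegral.integral_of_le hab,
    intervalIntegral.integral_of_le hab]
  set μ := volume.restrict (Set.Ioc (-(1/2):ℝ) (1/2))
  have hpq : Real.HolderConjugate 2 2 := Real.HolderConjugate.two_two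
  have key := MeasureTheory.integral_mul_le_Lp_mul_Lq_of_nonneg hpq
    (f := u) (g := v) (μ := μ)
    (Filter.Eventually.of_forall hun) (Filter.Eventually.of_forall hvn)
    (helper_memL2 u hu) (helper_memL2 v hv)
  have h2 : ∀ w : ℝ → ℝ, (∫ a, w a ^ (2:ℝ) ∂μ) = ∫ a, w a ^ 2 ∂μ := by
    intro w; apply integral_congr_ae; filter_upwards with x
    rw [Real.rpow_two]
  rw [h2 u, h2 v] at key
  refine key.trans ?_
  rw [← Real.sqrt_eq_rpow, ← Real.sqrt_eq_rpow]

def lacSort : ℕ × ℕ → ℕ × ℕ := fun r => if r.1 ≤ r.2 then r else (r.2, r.1)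

lemma lacSort_spec (r : ℕ × ℕ) :
    (lacSort r).1 ≤ (lacSort r).2 ∧ (lacSort r = r ∨ lacSort r = (r.2, r.1)) := by
  unfold lacSort
  split_ifs with h
  · exact ⟨h, Or.inl rfl⟩
  · exact ⟨le_of_not_ge h, Or.inr rfl⟩

set_option maxHeartbeats 2000000 in
lemma helper_count (q : ℝ) (hq : 1 < q) (L N : ℕ) (hL2 : (2:ℝ) < q ^ (L + 1))
    (n : ℕ → ℕ) (h1 : 1 ≤ n 1) (hg : ∀ k, (n (k + 1) : ℝ) ≥ q * n k) :
    (((Icc 1 N ×ˢ Icc 1 N) ×ˢ (Icc 1 N ×ˢ Icc 1 N)).filter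
        (fun p : (ℕ × ℕ) × ℕ × ℕ => n p.1.1 + n p.1.2 = n p.2.1 + n p.2.2)).card
      ≤ 8 * ((L + 1) * (N * N)) := by
  have hq0 : (0:ℝ) < q := lt_trans one_pos hq
  have hpos : ∀ k, 1 ≤ k → 1 ≤ n k := by
    intro k hk
    induction k with
    | zero => omega
    | succ m ih =>
      rcases Nat.eq_zero_or_pos m with hm | hm
      · subst hm; exact h1
      · have h2 := ih hm
        have h3 := hg m
        have : (1:ℝ) ≤ n (m+1) := by
          have : (1:ℝ) ≤ (n m : ℝ) := by exact_mod_cast h2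
          nlinarith
        exact_mod_cast this
  have hstep : ∀ k, 1 ≤ k → n k < n (k + 1) := by
    intro k hk
    have h2 : (1:ℝ) ≤ (n k : ℝ) := by exact_mod_cast hpos k hk
    have h3 := hg k
    have : (n k : ℝ) < n (k+1) := by nlinarith
    exact_mod_cast this
  have hlt : ∀ j k, 1 ≤ j → j < k → n j < n k := by
    intro j k hj hjk
    induction k with
    | zero => omega
    | succ m ih =>
      rcases Nat.lt_or_ge j m with h | h
      · exact (ih h).trans (hstep m (by omega))
      · have : j = m := by omega
        subst this; exact hstep j hj
  have hle : ∀ j k, 1 ≤ j → j ≤ k → n j ≤ n k := by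
    intro j k hj hjk
    rcases Nat.eq_or_lt_of_le hjk with h | h
    · subst h; exact le_rfl
    · exact (hlt j k hj h).le
  have hinj : ∀ j k, 1 ≤ j → 1 ≤ k → n j = n k → j = k := by
    intro j k hj hk h
    rcases Nat.lt_trichotomy j k with h' | h' | h'
    · exact absurd h (hlt j k hj h').ne
    · exact h'
    · exact absurd h.symm (hlt k j hk h').ne
  have hgrow : ∀ j k, 1 ≤ j → j ≤ k → q ^ (k - j) * (n j : ℝ) ≤ n k := by
    intro j k hj hjk
    induction k with
    | zero => omega
    | succ m ih =>
      rcases Nat.lt_or_ge j (m+1) with h | h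
      · have hjm : j ≤ m := by omega
        have h2 := ih hjm
        have h3 := hg m
        have he : m + 1 - j = (m - j) + 1 := by omega
        rw [he, pow_succ]
        have hn : (0:ℝ) ≤ (n j : ℝ) := Nat.cast_nonneg _
        calc q ^ (m - j) * q * (n j : ℝ) = q * (q ^ (m - j) * (n j:ℝ)) := by ring
          _ ≤ q * (n m : ℝ) := by nlinarith
          _ ≤ (n (m+1) : ℝ) := h3
      · have : j = m + 1 := by omega
        subst this; simp
  set T := Icc 1 N with hT
  set S := ((T ×ˢ T) ×ˢ (T ×ˢ T)).filter
      (fun p : (ℕ × ℕ) × ℕ × ℕ => n p.1.1 + n p.1.2 = n p.2.1 + n p.2.2) with hS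
  set S' := S.filter
      (fun p : (ℕ × ℕ) × ℕ × ℕ => p.1.1 ≤ p.1.2 ∧ p.2.1 ≤ p.2.2 ∧ p.2.2 ≤ p.1.2) with hS'
  have hcardS' : S'.card ≤ (L + 1) * (N * N) := by
    have := Finset.card_le_card_of_injOn
      (f := fun p : (ℕ × ℕ) × ℕ × ℕ => (p.1.2 - p.2.2, (p.1.2, p.2.1)))
      (s := S') (t := (range (L+1)) ×ˢ (T ×ˢ T)) ?_ ?_
    · calc S'.card ≤ ((range (L+1)) ×ˢ (T ×ˢ T)).card := this
        _ = (L + 1) * (N * N) := by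
          simp [Finset.card_product, Nat.card_Icc, hT]
    · rintro ⟨⟨a, b⟩, c, d⟩ hp
      simp only [hS', hS, hT, Finset.mem_coe, Finset.mem_filter, Finset.mem_product, Finset.mem_Icc] at hp
      obtain ⟨⟨⟨⟨ha1, haN⟩, hb1, hbN⟩, ⟨hc1, hcN⟩, hd1, hdN⟩, hsum⟩ := hp.1
      obtain ⟨hab, hcd, hdb⟩ := hp.2
      simp only [hT, Finset.mem_coe, Finset.mem_product, Finset.mem_range, Finset.mem_Icc]
      refine ⟨?_, ⟨hb1, hbN⟩, hc1, hcN⟩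
      have h1' : n b ≤ 2 * n d := by
        have := hle c d hc1 hcd
        omega
      have h2 : q ^ (b - d) * (n d : ℝ) ≤ n b := hgrow d b hd1 hdb
      have h3 : (1:ℝ) ≤ (n d : ℝ) := by exact_mod_cast hpos d hd1
      have h4 : q ^ (b - d) ≤ 2 := by
        by_contra hcon
        push_neg at hcon
        have : (n b : ℝ) ≤ 2 * (n d : ℝ) := by exact_mod_cast h1'
        nlinarith
      have : q ^ (b - d) < q ^ (L + 1) := lt_of_le_of_lt h4 hL2
      exact (pow_lt_pow_iff_right₀ hq).mp this
    · rintro ⟨⟨a, b⟩, c, d⟩ hp ⟨⟨a', b'⟩, c', d'⟩ hp' heq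
      simp only [hS', hS, hT, Finset.mem_coe, Finset.mem_filter, Finset.mem_product,
        Finset.mem_Icc] at hp hp'
      obtain ⟨⟨⟨⟨⟨ha1, haN⟩, hb1, hbN⟩, ⟨hc1, hcN⟩, hd1, hdN⟩, hsum⟩,
        hab, hcd, hdb⟩ := hp
      obtain ⟨⟨⟨⟨⟨ha1', haN'⟩, hb1', hbN'⟩, ⟨hc1', hcN'⟩, hd1', hdN'⟩, hsum'⟩,
        hab', hcd', hdb'⟩ := hp'
      simp only [Prod.mk.injEq] at heq
      obtain ⟨h1', h2', h3'⟩ := heq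
      have hb : b = b' := h2'
      have hc : c = c' := h3'
      have hd : d = d' := by omega
      subst hb; subst hc; subst hd
      have hna : n a = n a' := by omega
      have : a = a' := hinj a a' ha1 ha1' hna
      subst this
      rfl
  set σ : (ℕ × ℕ) × ℕ × ℕ → (ℕ × ℕ) × ℕ × ℕ := fun p =>
    if n (lacSort p.2).2 ≤ n (lacSort p.1).2 then (lacSort p.1, lacSort p.2)
    else (lacSort p.2, lacSort p.1) with hσ
  have hmemS' : ∀ r1 r2 s1 s2 : ℕ, 1 ≤ r1 → r1 ≤ N → 1 ≤ r2 → r2 ≤ N →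
      1 ≤ s1 → s1 ≤ N → 1 ≤ s2 → s2 ≤ N →
      n r1 + n r2 = n s1 + n s2 → r1 ≤ r2 → s1 ≤ s2 → n s2 ≤ n r2 →
      ((r1, r2), (s1, s2)) ∈ S' := by
    intro r1 r2 s1 s2 h1' h2' h3' h4' h5' h6' h7' h8' h9' h10' h11' h12'
    simp only [hS', hS, hT, Finset.mem_filter, Finset.mem_product, Finset.mem_Icc]
    refine ⟨⟨⟨⟨⟨h1', h2'⟩, h3', h4'⟩, ⟨h5', h6'⟩, h7', h8'⟩, h9'⟩, h10', h11', ?_⟩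
    by_contra hcon
    push_neg at hcon
    exact absurd (hlt _ _ h3' hcon) (by omega)
  have himg : S.image σ ⊆ S' := by
    intro y hy
    simp only [Finset.mem_image] at hy
    obtain ⟨⟨⟨a, b⟩, c, d⟩, hp, hpy⟩ := hy
    simp only [hS, hT, Finset.mem_filter, Finset.mem_product, Finset.mem_Icc] at hp
    obtain ⟨⟨⟨⟨ha1, haN⟩, hb1, hbN⟩, ⟨hc1, hcN⟩, hd1, hdN⟩, hsum⟩ := hp
    rw [← hpy]
    have hsp1 := (lacSort_spec (a, b)).1
    have hsp2 := (lacSort_spec (c, d)).1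
    rcases (lacSort_spec (a, b)).2 with h1' | h1' <;>
      rcases (lacSort_spec (c, d)).2 with h2' | h2' <;>
      simp only [hσ] <;>
      rw [h1'] at hsp1 ⊢ <;>
      rw [h2'] at hsp2 ⊢ <;>
      (try dsimp only at hsp1 hsp2 ⊢) <;>
      split_ifs with hif <;>
      exact hmemS' _ _ _ _ (by omega) (by omega) (by omega) (by omega) (by omega)
        (by omega) (by omega) (by omega) (by omega) (by assumption) (by assumption) (by omega)
  have hfiber : S.card ≤ 8 * (S.image σ).card := by
    apply Finset.card_le_mul_card_image
    intro y hy
    obtain ⟨⟨a, b⟩, c, d⟩ := y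
    have h8 : ∀ x ∈ S.filter (fun x => σ x = ((a, b), (c, d))),
        x ∈ (([((a,b),(c,d)), ((b,a),(c,d)), ((a,b),(d,c)), ((b,a),(d,c)),
          ((c,d),(a,b)), ((d,c),(a,b)), ((c,d),(b,a)), ((d,c),(b,a))]
          : List ((ℕ × ℕ) × ℕ × ℕ))).toFinset := by
      intro x hx
      obtain ⟨⟨a₀, b₀⟩, c₀, d₀⟩ := x
      rw [Finset.mem_filter] at hx
      have heq := hx.2
      simp only [hσ] at heq
      try dsimp only at heq
      simp only [List.mem_toFinset, List.mem_cons, List.not_mem_nil, or_false]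
      rcases (lacSort_spec (a₀, b₀)).2 with h1' | h1' <;>
        rcases (lacSort_spec (c₀, d₀)).2 with h2' | h2' <;>
        · rw [h1'] at heq
          rw [h2'] at heq
          try dsimp only at heq
          split_ifs at heq <;>
            · simp only [Prod.mk.injEq] at heq
              obtain ⟨⟨rfl, rfl⟩, rfl, rfl⟩ := heq
              simp
    refine le_trans (Finset.card_le_card h8) (le_trans (List.toFinset_card_le _) ?_)
    simp
  calc S.card ≤ 8 * (S.image σ).card := hfiber
    _ ≤ 8 * S'.card := Nat.mul_le_mul_left 8 (Finset.card_le_card himg)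
    _ ≤ 8 * ((L + 1) * (N * N)) := Nat.mul_le_mul_left 8 hcardS'

lemma helper_int (m : ℤ) :
    (∫ t in (-(1/2) : ℝ)..(1/2), Complex.exp (2 * π * Complex.I * (m : ℂ) * t))
      = if m = 0 then 1 else 0 := by
  by_cases hm : m = 0
  · simp [hm]; norm_num
  · simp only [hm, if_false]
    have hc : (2 * (π:ℂ) * Complex.I * m) ≠ 0 := by
      simp [Complex.I_ne_zero, Real.pi_ne_zero, hm]
    have hre : (∫ t in (-(1/2) : ℝ)..(1/2), Complex.exp (2 * π * Complex.I * (m : ℂ) * t))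
        = ∫ t in (-(1/2) : ℝ)..(1/2), Complex.exp ((2 * (π:ℂ) * Complex.I * m) * t) := by
      apply intervalIntegral.integral_congr; intro t _; ring_nf
    rw [hre]
    rw [integral_exp_mul_complex hc]
    have h1 : (2 * (π:ℂ) * Complex.I * m) * ((1/2 : ℝ) : ℂ)
        = (2 * (π:ℂ) * Complex.I * m) * ((-(1/2) : ℝ) : ℂ) + m * (2 * π * Complex.I) := by
      push_cast; ring
    rw [h1, Complex.exp_add, Complex.exp_int_mul_two_pi_mul_I, mul_one, sub_self, zero_div]

lemma helper_cont (c : ℂ) : Continuous fun t : ℝ => Complex.exp (c * t) :=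
  (continuous_const.mul Complex.continuous_ofReal).cexp

lemma helper_ofReal (f : ℝ → ℝ) (a b : ℝ) :
    (∫ x in a..b, ((f x : ℝ) : ℂ)) = ((∫ x in a..b, f x : ℝ) : ℂ) :=
  RCLike.intervalIntegral_ofReal

section Expand

variable (N : ℕ) (n : ℕ → ℕ)

noncomputable def lacF : ℝ → ℂ := fun t => ∑ k ∈ Icc 1 N, Complex.exp (2 * π * Complex.I * (n k : ℂ) * t)

lemma lacF_cont : Continuous (lacF N n) := by
  apply continuous_finset_sum
  intro k _
  exact helper_cont (2 * π * Complex.I * (n k : ℂ))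

lemma lacF_sq (t : ℝ) : lacF N n t * lacF N n t
    = ∑ p ∈ Icc 1 N ×ˢ Icc 1 N,
        Complex.exp (2 * π * Complex.I * ((n p.1 + n p.2 : ℕ) : ℂ) * t) := by
  unfold lacF
  rw [Finset.sum_mul_sum, Finset.sum_product]
  apply Finset.sum_congr rfl; intro j _
  apply Finset.sum_congr rfl; intro k _
  rw [← Complex.exp_add]
  congr 1
  push_cast
  ring

lemma lacF_conj (t : ℝ) : (starRingEnd ℂ) (lacF N n t)
    = ∑ k ∈ Icc 1 N, Complex.exp (-(2 * π * Complex.I * (n k : ℂ) * t)) := by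
  unfold lacF
  rw [map_sum]
  apply Finset.sum_congr rfl; intro k _
  rw [← Complex.exp_conj]
  congr 1
  simp only [map_mul, Complex.conj_I, Complex.conj_ofReal, map_natCast, map_ofNat]
  ring

lemma lacF_conj_sq (t : ℝ) : (starRingEnd ℂ) (lacF N n t) * (starRingEnd ℂ) (lacF N n t)
    = ∑ p ∈ Icc 1 N ×ˢ Icc 1 N,
        Complex.exp (-(2 * π * Complex.I * ((n p.1 + n p.2 : ℕ) : ℂ) * t)) := by
  rw [lacF_conj]
  rw [Finset.sum_mul_sum, Finset.sum_product]
  apply Finset.sum_congr rfl; intro j _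
  apply Finset.sum_congr rfl; intro k _
  rw [← Complex.exp_add]
  congr 1
  push_cast
  ring

lemma lacF_norm_sq (t : ℝ) : ((‖lacF N n t‖ ^ 2 : ℝ) : ℂ) = lacF N n t * (starRingEnd ℂ) (lacF N n t) := by
  rw [Complex.mul_conj]
  congr 1
  rw [Complex.normSq_eq_norm_sq]

lemma lacF_pow4 (t : ℝ) : ((‖lacF N n t‖ ^ 4 : ℝ) : ℂ)
    = ∑ p ∈ (Icc 1 N ×ˢ Icc 1 N) ×ˢ (Icc 1 N ×ˢ Icc 1 N),
        Complex.exp (2 * π * Complex.I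
          * (((n p.1.1 + n p.1.2 : ℤ) - (n p.2.1 + n p.2.2 : ℤ) : ℤ) : ℂ) * t) := by
  have h4 : ((‖lacF N n t‖ ^ 4 : ℝ) : ℂ) = (((‖lacF N n t‖ ^ 2 : ℝ) : ℂ)) ^ 2 := by
    push_cast; ring
  rw [h4, lacF_norm_sq]
  have : (lacF N n t * (starRingEnd ℂ) (lacF N n t)) ^ 2
      = (lacF N n t * lacF N n t)
        * ((starRingEnd ℂ) (lacF N n t) * (starRingEnd ℂ) (lacF N n t)) := by ring
  rw [this, lacF_sq, lacF_conj_sq, Finset.sum_mul_sum]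
  conv_rhs => rw [Finset.sum_product]
  apply Finset.sum_congr rfl; intro p _
  apply Finset.sum_congr rfl; intro r _
  rw [← Complex.exp_add]
  congr 1
  push_cast
  ring

lemma lacF_int4 : (∫ t in (-(1/2) : ℝ)..(1/2), ‖lacF N n t‖ ^ 4)
    = (((Icc 1 N ×ˢ Icc 1 N) ×ˢ (Icc 1 N ×ˢ Icc 1 N)).filter
        (fun p : (ℕ × ℕ) × ℕ × ℕ => n p.1.1 + n p.1.2 = n p.2.1 + n p.2.2)).card := by
  have key : (∫ t in (-(1/2) : ℝ)..(1/2), ((‖lacF N n t‖ ^ 4 : ℝ) : ℂ))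
      = (((Icc 1 N ×ˢ Icc 1 N) ×ˢ (Icc 1 N ×ˢ Icc 1 N)).filter
        (fun p : (ℕ × ℕ) × ℕ × ℕ =>
          ((n p.1.1 + n p.1.2 : ℤ) - (n p.2.1 + n p.2.2 : ℤ) : ℤ) = 0)).card := by
    have : (∫ t in (-(1/2) : ℝ)..(1/2), ((‖lacF N n t‖ ^ 4 : ℝ) : ℂ))
        = ∫ t in (-(1/2) : ℝ)..(1/2),
            ∑ p ∈ (Icc 1 N ×ˢ Icc 1 N) ×ˢ (Icc 1 N ×ˢ Icc 1 N),
              Complex.exp (2 * π * Complex.I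
                * (((n p.1.1 + n p.1.2 : ℤ) - (n p.2.1 + n p.2.2 : ℤ) : ℤ) : ℂ) * t) := by
      apply intervalIntegral.integral_congr
      intro t _
      exact lacF_pow4 N n t
    rw [this]
    rw [intervalIntegral.integral_finset_sum]
    · rw [Finset.sum_congr rfl (fun p _ => helper_int _), Finset.sum_boole]
    · intro p _
      have hc := helper_cont (2 * π * Complex.I
        * (((n p.1.1 + n p.1.2 : ℤ) - (n p.2.1 + n p.2.2 : ℤ) : ℤ) : ℂ))
      exact hc.intervalIntegrable _ _
  have hfc : (((Icc 1 N ×ˢ Icc 1 N) ×ˢ (Icc 1 N ×ˢ Icc 1 N)).filter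
        (fun p : (ℕ × ℕ) × ℕ × ℕ =>
          ((n p.1.1 + n p.1.2 : ℤ) - (n p.2.1 + n p.2.2 : ℤ) : ℤ) = 0))
      = (((Icc 1 N ×ˢ Icc 1 N) ×ˢ (Icc 1 N ×ˢ Icc 1 N)).filter
        (fun p : (ℕ × ℕ) × ℕ × ℕ => n p.1.1 + n p.1.2 = n p.2.1 + n p.2.2)) := by
    apply Finset.filter_congr
    intro p _
    constructor
    · intro h; omega
    · intro h; omega
  rw [hfc, helper_ofReal] at key
  exact_mod_cast key

lemma lacF_int2 (hinj : ∀ j k, 1 ≤ j → j ≤ N → 1 ≤ k → k ≤ N → n j = n k → j = k) :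
    (∫ t in (-(1/2) : ℝ)..(1/2), ‖lacF N n t‖ ^ 2) = N := by
  have expand : ∀ t : ℝ, ((‖lacF N n t‖ ^ 2 : ℝ) : ℂ)
      = ∑ p ∈ Icc 1 N ×ˢ Icc 1 N,
          Complex.exp (2 * π * Complex.I * (((n p.1 : ℤ) - (n p.2 : ℤ) : ℤ) : ℂ) * t) := by
    intro t
    rw [lacF_norm_sq, lacF_conj]
    unfold lacF
    rw [Finset.sum_mul_sum]
    conv_rhs => rw [Finset.sum_product]
    apply Finset.sum_congr rfl; intro j _
    apply Finset.sum_congr rfl; intro k _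
    rw [← Complex.exp_add]
    congr 1
    push_cast
    ring
  have key : (∫ t in (-(1/2) : ℝ)..(1/2), ((‖lacF N n t‖ ^ 2 : ℝ) : ℂ))
      = ((Icc 1 N ×ˢ Icc 1 N).filter
          (fun p : ℕ × ℕ => ((n p.1 : ℤ) - (n p.2 : ℤ) : ℤ) = 0)).card := by
    rw [intervalIntegral.integral_congr (fun t _ => expand t)]
    rw [intervalIntegral.integral_finset_sum]
    · rw [Finset.sum_congr rfl (fun p _ => helper_int _), Finset.sum_boole]
    · intro p _
      exact (helper_cont (2 * π * Complex.I * (((n p.1 : ℤ) - (n p.2 : ℤ) : ℤ) : ℂ))).intervalIntegrable _ _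
  have hcard : ((Icc 1 N ×ˢ Icc 1 N).filter
      (fun p : ℕ × ℕ => ((n p.1 : ℤ) - (n p.2 : ℤ) : ℤ) = 0)).card = N := by
    rw [show ((Icc 1 N ×ˢ Icc 1 N).filter
        (fun p : ℕ × ℕ => ((n p.1 : ℤ) - (n p.2 : ℤ) : ℤ) = 0)).card
        = ((Icc 1 N ×ˢ Icc 1 N).filter (fun p : ℕ × ℕ => n p.1 = n p.2)).card by
      congr 1
      apply Finset.filter_congr
      intro p _
      constructor
      · intro h; omega
      · intro h; omega]
    have := Finset.card_bij' (s := (Icc 1 N ×ˢ Icc 1 N).filter (fun p : ℕ × ℕ => n p.1 = n p.2))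
      (t := Icc 1 N) (fun p _ => p.1) (fun k _ => (k, k)) ?_ ?_ ?_ ?_
    · rw [this, Nat.card_Icc]; omega
    · rintro ⟨a, b⟩ hp
      simp only [Finset.mem_filter, Finset.mem_product] at hp
      exact hp.1.1
    · intro k hk
      exact Finset.mem_filter.mpr ⟨Finset.mem_product.mpr ⟨hk, hk⟩, rfl⟩

    · rintro ⟨a, b⟩ hp
      simp only [Finset.mem_filter, Finset.mem_product, Finset.mem_Icc] at hp
      obtain ⟨⟨⟨ha1, haN⟩, hb1, hbN⟩, hab⟩ := hp
      have : a = b := hinj a b ha1 haN hb1 hbN hab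
      subst this
      rfl
    · intro k hk
      rfl
  rw [hcard, helper_ofReal] at key
  exact_mod_cast key

end Expand

lemma lac_pos (q : ℝ) (hq : 1 < q) (n : ℕ → ℕ) (h1 : 1 ≤ n 1)
    (hg : ∀ k, (n (k + 1) : ℝ) ≥ q * n k) : ∀ k, 1 ≤ k → 1 ≤ n k := by
  intro k hk
  induction k with
  | zero => omega
  | succ m ih =>
    rcases Nat.eq_zero_or_pos m with hm | hm
    · subst hm; exact h1
    · have h2 := ih hm
      have h3 := hg m
      have : (1:ℝ) ≤ n (m+1) := by
        have : (1:ℝ) ≤ (n m : ℝ) := by exact_mod_cast h2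
        nlinarith
      exact_mod_cast this

lemma lac_lt (q : ℝ) (hq : 1 < q) (n : ℕ → ℕ) (h1 : 1 ≤ n 1)
    (hg : ∀ k, (n (k + 1) : ℝ) ≥ q * n k) : ∀ j k, 1 ≤ j → j < k → n j < n k := by
  have hstep : ∀ k, 1 ≤ k → n k < n (k + 1) := by
    intro k hk
    have h2 : (1:ℝ) ≤ (n k : ℝ) := by exact_mod_cast lac_pos q hq n h1 hg k hk
    have h3 := hg k
    have : (n k : ℝ) < n (k+1) := by nlinarith
    exact_mod_cast this
  intro j k hj hjk
  induction k with
  | zero => omega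
  | succ m ih =>
    rcases Nat.lt_or_ge j m with h | h
    · exact (ih h).trans (hstep m (by omega))
    · have : j = m := by omega
      subst this; exact hstep j hj

theorem stmt_11 (q : ℝ) (hq : 1 < q) :
    ∃ C : ℝ, 0 < C ∧
      ∀ (N : ℕ), 2 ≤ N →
        ∀ (n : ℕ → ℕ), 1 ≤ n 1 → (∀ k, (n (k + 1) : ℝ) ≥ q * n k) →
          (∫ t in (-(1 / 2) : ℝ)..(1 / 2),
              ‖∑ k ∈ Finset.Icc 1 N, Complex.exp (2 * π * Complex.I * (n k : ℂ) * t)‖)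
            ≥ C * Real.sqrt N := by
  obtain ⟨L, hL⟩ := pow_unbounded_of_one_lt (2:ℝ) hq
  have hL2 : (2:ℝ) < q ^ (L + 1) := hL.trans_le (pow_le_pow_right₀ hq.le (Nat.le_succ L))
  have hKden : (0:ℝ) < 8 * (L + 1) := by positivity
  set K : ℝ := Real.sqrt (8 * (L + 1)) with hKdef
  have hK : 0 < K := Real.sqrt_pos.mpr hKden
  refine ⟨1 / K, by positivity, ?_⟩
  intro N hN n hn1 hng
  have hinj : ∀ j k, 1 ≤ j → j ≤ N → 1 ≤ k → k ≤ N → n j = n k → j = k := by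
    intro j k hj _ hk _ h
    rcases Nat.lt_trichotomy j k with h' | h' | h'
    · exact absurd h (lac_lt q hq n hn1 hng j k hj h').ne
    · exact h'
    · exact absurd h.symm (lac_lt q hq n hn1 hng k j hk h').ne
  show (∫ t in (-(1 / 2) : ℝ)..(1 / 2), ‖lacF N n t‖) ≥ 1 / K * Real.sqrt N
  have hFc : Continuous (lacF N n) := lacF_cont N n
  have hnc : Continuous fun t => ‖lacF N n t‖ := hFc.norm
  have hab : (-(1/2) : ℝ) ≤ 1/2 := by norm_num
  set A := ∫ t in (-(1/2) : ℝ)..(1/2), ‖lacF N n t‖ with hA_def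
  set A3 := ∫ t in (-(1/2) : ℝ)..(1/2), ‖lacF N n t‖ ^ 3 with hA3_def
  set A4 := ∫ t in (-(1/2) : ℝ)..(1/2), ‖lacF N n t‖ ^ 4 with hA4_def
  have hA : 0 ≤ A :=
    intervalIntegral.integral_nonneg hab (fun x _ => norm_nonneg _)
  have hA3 : 0 ≤ A3 :=
    intervalIntegral.integral_nonneg hab (fun x _ => by positivity)
  have hA2 : (∫ t in (-(1/2) : ℝ)..(1/2), ‖lacF N n t‖ ^ 2) = (N : ℝ) := by
    rw [lacF_int2 N n hinj]
  have hM : (0:ℝ) < N := by positivity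
  set s := Real.sqrt N with hs_def
  have hs : 0 < s := Real.sqrt_pos.mpr hM
  have hss : s * s = (N : ℝ) := Real.mul_self_sqrt hM.le
  -- L4 bound
  have hA4card := lacF_int4 N n
  have hcount := helper_count q hq L N hL2 n hn1 hng
  have hA4bound : A4 ≤ 8 * (L + 1) * (N : ℝ) ^ 2 := by
    rw [hA4_def, hA4card]
    have : ((((Icc 1 N ×ˢ Icc 1 N) ×ˢ (Icc 1 N ×ˢ Icc 1 N)).filter
        (fun p : (ℕ × ℕ) × ℕ × ℕ => n p.1.1 + n p.1.2 = n p.2.1 + n p.2.2)).card : ℝ)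
        ≤ ((8 * ((L + 1) * (N * N)) : ℕ) : ℝ) := by exact_mod_cast hcount
    refine this.trans ?_
    push_cast
    ring_nf
    nlinarith [hM]
  have hA4 : 0 ≤ A4 :=
    intervalIntegral.integral_nonneg hab (fun x _ => by positivity)
  -- Cauchy-Schwarz 2: A3 ≤ sqrt(N) * sqrt(A4)
  have cs2 : A3 ≤ Real.sqrt (N : ℝ) * Real.sqrt A4 := by
    have h := helper_cs (fun x => ‖lacF N n x‖) (fun x => ‖lacF N n x‖ ^ 2)
      hnc (hnc.pow 2) (fun x => norm_nonneg _) (fun x => by positivity)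
    have e1 : (∫ x in (-(1/2) : ℝ)..(1/2), ‖lacF N n x‖ * ‖lacF N n x‖ ^ 2) = A3 := by
      rw [hA3_def]
      apply intervalIntegral.integral_congr
      intro x _; ring
    have e2 : (∫ x in (-(1/2) : ℝ)..(1/2), (‖lacF N n x‖ ^ 2) ^ 2) = A4 := by
      rw [hA4_def]
      apply intervalIntegral.integral_congr
      intro x _; ring
    rw [e1, e2, hA2] at h
    exact h
  -- Cauchy-Schwarz 1: N ≤ sqrt(A) * sqrt(A3)
  have cs1 : (N : ℝ) ≤ Real.sqrt A * Real.sqrt A3 := by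
    have h := helper_cs (fun x => Real.sqrt ‖lacF N n x‖)
      (fun x => Real.sqrt (‖lacF N n x‖ ^ 3))
      (Real.continuous_sqrt.comp hnc) (Real.continuous_sqrt.comp (hnc.pow 3))
      (fun x => Real.sqrt_nonneg _) (fun x => Real.sqrt_nonneg _)
    have e0 : (∫ x in (-(1/2) : ℝ)..(1/2),
        Real.sqrt ‖lacF N n x‖ * Real.sqrt (‖lacF N n x‖ ^ 3)) = (N:ℝ) := by
      rw [← hA2]
      apply intervalIntegral.integral_congr
      intro x _
      simp only
      rw [← Real.sqrt_mul (norm_nonneg _)]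
      rw [show ‖lacF N n x‖ * ‖lacF N n x‖ ^ 3 = (‖lacF N n x‖ ^ 2) ^ 2 by ring]
      exact Real.sqrt_sq (by positivity)
    have e1 : (∫ x in (-(1/2) : ℝ)..(1/2), (Real.sqrt ‖lacF N n x‖) ^ 2) = A := by
      rw [hA_def]
      apply intervalIntegral.integral_congr
      intro x _
      simp only
      exact Real.sq_sqrt (norm_nonneg _)
    have e2 : (∫ x in (-(1/2) : ℝ)..(1/2), (Real.sqrt (‖lacF N n x‖ ^ 3)) ^ 2) = A3 := by
      rw [hA3_def]
      apply intervalIntegral.integral_congr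
      intro x _
      simp only
      exact Real.sq_sqrt (by positivity)
    rw [e0, e1, e2] at h
    exact h
  -- bound sqrt A4
  have hsA4 : Real.sqrt A4 ≤ K * (N : ℝ) := by
    refine (Real.sqrt_le_sqrt hA4bound).trans ?_
    rw [show (8 : ℝ) * (L + 1) * (N:ℝ)^2 = (8 * (L+1)) * (N:ℝ)^2 by ring,
      Real.sqrt_mul hKden.le, Real.sqrt_sq hM.le]
  -- combine
  have h3 : ((N:ℝ))^2 ≤ A * (s * (K * (N : ℝ))) := by
    have hstep1 : ((N:ℝ))^2 ≤ A * A3 := by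
      calc ((N:ℝ))^2 ≤ (Real.sqrt A * Real.sqrt A3)^2 := by
            apply pow_le_pow_left₀ hM.le cs1
        _ = A * A3 := by
            rw [mul_pow, Real.sq_sqrt hA, Real.sq_sqrt hA3]
    refine hstep1.trans ?_
    apply mul_le_mul_of_nonneg_left _ hA
    calc A3 ≤ Real.sqrt (N:ℝ) * Real.sqrt A4 := cs2
      _ ≤ s * (K * (N:ℝ)) := by
          apply mul_le_mul_of_nonneg_left hsA4 (Real.sqrt_nonneg _)
  have hfinal : s ≤ K * A := by
    rw [← hss] at h3
    nlinarith [h3, hs, hK, hA, mul_pos (mul_pos hs hs) hs]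
  rw [ge_iff_le, one_div, inv_mul_eq_div, div_le_iff₀ hK]
  linarith [hfinal]
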